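/- arXiv:2007.01896 — 5 statements merged into one kernel-verified Lean document; each statement's English description precedes it below -/
import Mathlib

section
/- For every real parameter b ≥ 3, every state in which exactly one cell cooperates (i.e. the states 1, 2, 4, 8, 16, 32) is mapped by t_b to the pure-defection state 0; moreover t_b(0) = 0. -/
/-- Von Neumann neighbourhoods on the 2×3 toroidal lattice.
Index `i : Fin 6` represents cell `i+1`, so `N(1)={2,3,5}` becomes `nbrs 0 = {1,2,4}`, etc. -/
def nbrs : Fin 6 → Finset (Fin 6)
  | 0 => {1, 2, 4}
  | 1 => {0, 3, 5}
  | 2 => {0, 3, 4}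
  | 3 => {1, 2, 5}
  | 4 => {0, 2, 5}
  | 5 => {1, 3, 4}

lemma nbrs_nonempty (i : Fin 6) : (nbrs i).Nonempty := by
  fin_cases i <;> simp [nbrs]

/-- Pairwise payoff to the first argument; `true` = cooperate, `false` = defect. -/
def pay (b : ℝ) : Bool → Bool → ℝ
  | false, false => 1
  | false, true  => b
  | true,  false => 0
  | true,  true  => 3

/-- Net payoff of cell `i` in state `σ`. -/
def payoff (b : ℝ) (σ : Fin 6 → Bool) (i : Fin 6) : ℝ :=
  ∑ j ∈ nbrs i, pay b (σ i) (σ j)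

/- Synchronous update map `t_b` on states: if the best payoff `m` among the
neighbours of cell `i` satisfies `m ≤ P_b(σ,i)` the cell keeps its strategy;
otherwise it cooperates iff some maximally-paid neighbour cooperates. -/
open scoped Classical in
noncomputable def update (b : ℝ) (σ : Fin 6 → Bool) : Fin 6 → Bool := fun i =>
  let m := (nbrs i).sup' (nbrs_nonempty i) fun j => payoff b σ j
  if m ≤ payoff b σ i then σ i
  else if ∃ j ∈ nbrs i, payoff b σ j = m ∧ σ j = true then true else false

/-- Decode an integer `0 ≤ n < 64` into a state: cell 1 is the most significant bit,
bit value 1 = cooperate. -/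
def dec (n : ℕ) : Fin 6 → Bool := fun i => n.testBit (5 - i.val)

/-- Encode a state as an integer via `n = Σ β(i)·2^(6−i)`. -/
def enc (σ : Fin 6 → Bool) : ℕ := ∑ i : Fin 6, if σ i then 2 ^ (5 - i.val) else 0

/-- The update map `t_b` acting on integer-coded states. -/
noncomputable def T (b : ℝ) (n : ℕ) : ℕ := enc (update b (dec n))

lemma pay_ge_one (b : ℝ) (hb : 3 ≤ b) (x : Bool) : 1 ≤ pay b false x := by
  cases x <;> simp [pay] <;> linarith

lemma payoff_ge_three (b : ℝ) (hb : 3 ≤ b) (σ : Fin 6 → Bool) (j : Fin 6)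
    (hj : σ j = false) : 3 ≤ payoff b σ j := by
  have hcard : (nbrs j).card = 3 := by fin_cases j <;> decide
  calc (3:ℝ) = (nbrs j).card • (1:ℝ) := by rw [hcard]; simp
    _ ≤ ∑ k ∈ nbrs j, pay b (σ j) (σ k) := by
        apply Finset.card_nsmul_le_sum
        intro k _; rw [hj]; exact pay_ge_one b hb _
    _ = payoff b σ j := rfl

lemma lone_coop (b : ℝ) (hb : 3 ≤ b) (c : Fin 6) :
    update b (fun i => decide (i = c)) = fun _ => false := by
  set σ : Fin 6 → Bool := fun i => decide (i = c) with hσ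
  have hσc : σ c = true := by simp [hσ]
  have hσne : ∀ i, i ≠ c → σ i = false := by intro i hi; simp [hσ, hi]
  have hpc : payoff b σ c = 0 := by
    unfold payoff
    apply Finset.sum_eq_zero
    intro j hj
    have hjc : j ≠ c := by
      rintro rfl; exact absurd hj (by revert hj; fin_cases j <;> decide)
    rw [hσc, hσne j hjc]; rfl
  have hex : ∀ i c' : Fin 6, ∃ j ∈ nbrs i, j ≠ c' := by decide
  have hm3 : ∀ i : Fin 6,
      3 ≤ (nbrs i).sup' (nbrs_nonempty i) (fun j => payoff b σ j) := by
    intro i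
    obtain ⟨j, hj, hjc⟩ := hex i c
    exact le_trans (payoff_ge_three b hb σ j (hσne j hjc)) (Finset.le_sup' _ hj)
  funext i
  simp only [update]
  have hexf : ¬ (∃ j ∈ nbrs i, payoff b σ j =
      (nbrs i).sup' (nbrs_nonempty i) (fun j => payoff b σ j) ∧ σ j = true) := by
    rintro ⟨j, hj, hpj, hjt⟩
    have hjc : j = c := by
      by_contra hne
      rw [hσne j hne] at hjt; exact Bool.false_ne_true hjt
    subst hjc
    rw [hpc] at hpj
    have := hm3 i
    rw [← hpj] at this
    linarith
  rw [if_neg hexf]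
  by_cases hic : i = c
  · subst hic
    rw [if_neg]
    rw [hpc]
    have := hm3 i
    intro h; linarith
  · rw [hσne i hic, ite_self]

lemma dec_zero : dec 0 = fun _ => false := by
  funext i; fin_cases i <;> rfl

lemma update_zero (b : ℝ) : update b (fun _ => false) = fun _ => false := by
  have hp : ∀ i : Fin 6, payoff b (fun _ => false) i = 3 := by
    intro i; fin_cases i <;> simp [payoff, nbrs, pay, Finset.sum_insert, Finset.mem_insert] <;> norm_num
  funext i
  simp only [update, hp]
  rw [if_pos (Finset.sup'_le _ _ fun j _ => le_refl (3:ℝ))]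

theorem stmt1 : ∀ b : ℝ, 3 ≤ b →
    (∀ n ∈ ({1, 2, 4, 8, 16, 32} : Finset ℕ), T b n = 0) ∧ T b 0 = 0 := by
  intro b hb
  constructor
  · intro n hn
    fin_cases hn
    · have hd : dec 1 = fun i => decide (i = 5) := by funext i; fin_cases i <;> rfl
      simp [T, hd, lone_coop b hb, enc]
    · have hd : dec 2 = fun i => decide (i = 4) := by funext i; fin_cases i <;> rfl
      simp [T, hd, lone_coop b hb, enc]
    · have hd : dec 4 = fun i => decide (i = 3) := by funext i; fin_cases i <;> rfl
      simp [T, hd, lone_coop b hb, enc]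
    · have hd : dec 8 = fun i => decide (i = 2) := by funext i; fin_cases i <;> rfl
      simp [T, hd, lone_coop b hb, enc]
    · have hd : dec 16 = fun i => decide (i = 1) := by funext i; fin_cases i <;> rfl
      simp [T, hd, lone_coop b hb, enc]
    · have hd : dec 32 = fun i => decide (i = 0) := by funext i; fin_cases i <;> rfl
      simp [T, hd, lone_coop b hb, enc]
  · simp [T, dec_zero, update_zero, enc]
end

section
/- (Regime A absorption) For every real parameter b > 4 and every state x in which at least one cell defects (i.e. every state x ≠ 63), applying the update map twice yields pure defection: t_b(t_b(x)) = 0. -/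
/- ## auxiliary -/

def regOK : ℕ → ℝ → Prop
  | 0 => fun b => 4 < b ∧ b < 7
  | 1 => fun b => b = 7
  | 2 => fun b => 7 < b
  | _ => fun _ => False

def cnt (σ : Fin 6 → Bool) (i : Fin 6) : ℕ := ((nbrs i).filter (fun j => σ j = true)).card

def rk (r : ℕ) (s : Bool) (c : ℕ) : ℕ :=
  match s, c with
  | true, 0 => 0
  | true, 1 => 1
  | true, 2 => 2
  | true, _ => if r = 0 then 4 else 3
  | false, 0 => 1
  | false, 1 => if r = 2 then 4 else 3
  | false, 2 => if r = 1 then 4 else 5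
  | false, _ => if r = 1 then 5 else 6

def vv (b : ℝ) (s : Bool) (c : ℕ) : ℝ := if s then 3 * c else (b - 1) * c + 3

lemma cnt_le (σ : Fin 6 → Bool) (i : Fin 6) : cnt σ i ≤ 3 := by
  have h : (nbrs i).card = 3 := by fin_cases i <;> decide
  calc cnt σ i ≤ (nbrs i).card := Finset.card_filter_le _ _
    _ = 3 := h

set_option maxHeartbeats 1000000 in
lemma rk_le {r : ℕ} {b : ℝ} (hb : regOK r b) {s s' : Bool} {c c' : ℕ}
    (hc : c ≤ 3) (hc' : c' ≤ 3) :
    (vv b s c ≤ vv b s' c' ↔ rk r s c ≤ rk r s' c') := by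
  match r with
  | 0 =>
    obtain ⟨h1, h2⟩ := hb
    interval_cases c <;> interval_cases c' <;> cases s <;> cases s' <;>
      simp [vv, rk] <;> first | linarith | (push_neg; linarith)
  | 1 =>
    have h : b = 7 := hb
    interval_cases c <;> interval_cases c' <;> cases s <;> cases s' <;>
      simp [vv, rk] <;> first | linarith | (push_neg; linarith)
  | 2 =>
    have h : 7 < b := hb
    interval_cases c <;> interval_cases c' <;> cases s <;> cases s' <;>
      simp [vv, rk] <;> first | linarith | (push_neg; linarith)
  | (n+3) => exact absurd hb (by simp [regOK])

lemma payoff_eq (b : ℝ) (σ : Fin 6 → Bool) (i : Fin 6) :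
    payoff b σ i = vv b (σ i) (cnt σ i) := by
  have hcard : (nbrs i).card = 3 := by fin_cases i <;> decide
  cases h : σ i with
  | true =>
    have hp : ∀ j, pay b true (σ j) = 3 * (if σ j = true then (1:ℝ) else 0) := by
      intro j; cases σ j <;> simp [pay]
    simp only [payoff, h, hp, ← Finset.mul_sum, Finset.sum_boole, vv, cnt, if_pos]
    try simp [cnt]
  | false =>
    have hp : ∀ j, pay b false (σ j) = (b - 1) * (if σ j = true then (1:ℝ) else 0) + 1 := by
      intro j; cases σ j <;> simp [pay]
    simp only [payoff, h, hp, Finset.sum_add_distrib, ← Finset.mul_sum, Finset.sum_boole,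
      Finset.sum_const, hcard, nsmul_eq_mul, vv, cnt]
    try simp [cnt]

def updB (r : ℕ) (σ : Fin 6 → Bool) : Fin 6 → Bool := fun i =>
  let m := (nbrs i).sup' (nbrs_nonempty i) fun j => rk r (σ j) (cnt σ j)
  if m ≤ rk r (σ i) (cnt σ i) then σ i
  else decide (∃ j ∈ nbrs i, rk r (σ j) (cnt σ j) = m ∧ σ j = true)

lemma update_eq {r : ℕ} {b : ℝ} (hb : regOK r b) (σ : Fin 6 → Bool) :
    update b σ = updB r σ := by
  funext i
  have key : ∀ j k : Fin 6, (payoff b σ j ≤ payoff b σ k ↔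
      rk r (σ j) (cnt σ j) ≤ rk r (σ k) (cnt σ k)) := by
    intro j k
    rw [payoff_eq, payoff_eq]
    exact rk_le hb (cnt_le σ j) (cnt_le σ k)
  set mR := (nbrs i).sup' (nbrs_nonempty i) fun j => payoff b σ j with hmR
  set mN := (nbrs i).sup' (nbrs_nonempty i) fun j => rk r (σ j) (cnt σ j) with hmN
  have hA : (mR ≤ payoff b σ i) ↔ (mN ≤ rk r (σ i) (cnt σ i)) := by
    rw [hmR, hmN, Finset.sup'_le_iff, Finset.sup'_le_iff]
    exact ⟨fun h j hj => (key j i).mp (h j hj), fun h j hj => (key j i).mpr (h j hj)⟩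
  have hachR : ∀ j ∈ nbrs i, (payoff b σ j = mR ↔ ∀ k ∈ nbrs i, payoff b σ k ≤ payoff b σ j) := by
    intro j hj
    simp only [hmR]
    constructor
    · intro h k hk; rw [h]; exact Finset.le_sup' _ hk
    · intro h
      exact le_antisymm (Finset.le_sup' _ hj) (Finset.sup'_le _ _ h)
  have hachN : ∀ j ∈ nbrs i, (rk r (σ j) (cnt σ j) = mN ↔
      ∀ k ∈ nbrs i, rk r (σ k) (cnt σ k) ≤ rk r (σ j) (cnt σ j)) := by
    intro j hj
    simp only [hmN]
    constructor
    · intro h k hk; rw [h]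
      exact Finset.le_sup' (fun k => rk r (σ k) (cnt σ k)) hk
    · intro h
      exact le_antisymm (Finset.le_sup' (fun k => rk r (σ k) (cnt σ k)) hj)
        (Finset.sup'_le _ _ h)
  have hB : (∃ j ∈ nbrs i, payoff b σ j = mR ∧ σ j = true) ↔
      (∃ j ∈ nbrs i, rk r (σ j) (cnt σ j) = mN ∧ σ j = true) := by
    constructor
    · rintro ⟨j, hj, h1, h2⟩
      refine ⟨j, hj, (hachN j hj).mpr ?_, h2⟩
      intro k hk
      exact (key k j).mp (((hachR j hj).mp h1) k hk)
    · rintro ⟨j, hj, h1, h2⟩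
      refine ⟨j, hj, (hachR j hj).mpr ?_, h2⟩
      intro k hk
      exact (key k j).mpr (((hachN j hj).mp h1) k hk)
  show (if mR ≤ payoff b σ i then σ i
    else if ∃ j ∈ nbrs i, payoff b σ j = mR ∧ σ j = true then true else false) =
    (if mN ≤ rk r (σ i) (cnt σ i) then σ i
    else decide (∃ j ∈ nbrs i, rk r (σ j) (cnt σ j) = mN ∧ σ j = true))
  by_cases h1 : mN ≤ rk r (σ i) (cnt σ i)
  · rw [if_pos (hA.mpr h1), if_pos h1]
  · rw [if_neg (fun h => h1 (hA.mp h)), if_neg h1]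
    by_cases h2 : ∃ j ∈ nbrs i, rk r (σ j) (cnt σ j) = mN ∧ σ j = true
    · rw [if_pos (hB.mpr h2)]
      simp [h2]
    · rw [if_neg (fun h => h2 (hB.mp h))]
      simp [h2]

def TB (r : ℕ) (n : ℕ) : ℕ := enc (updB r (dec n))

lemma T_eq {r : ℕ} {b : ℝ} (hb : regOK r b) (n : ℕ) : T b n = TB r n := by
  rw [T, TB, update_eq hb]

lemma TB_key : ∀ r ∈ Finset.range 3, ∀ x ∈ Finset.range 64, x ≠ 63 → TB r (TB r x) = 0 := by
  decide


theorem stmt2 : ∀ b : ℝ, 4 < b → ∀ x ∈ Finset.range 64, x ≠ 63 → T b (T b x) = 0 := by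
  intro b hb x hx hne
  have main : ∀ r, regOK r b → T b (T b x) = 0 := by
    intro r hr
    rw [T_eq hr, T_eq hr]
    match r with
    | 0 => exact TB_key 0 (by decide) x hx hne
    | 1 => exact TB_key 1 (by decide) x hx hne
    | 2 => exact TB_key 2 (by decide) x hx hne
    | (n+3) => exact absurd hr (by simp [regOK])
  rcases lt_trichotomy b 7 with h | h | h
  · exact main 0 ⟨hb, h⟩
  · exact main 1 h
  · exact main 2 h
end

section
/- (Regime B image chain) For b = 4: the image of the set {0,1,...,62} (all states other than pure cooperation 63) under the update map t_4 equals {0, 5, 10, 17, 20, 21, 23, 29, 34, 40, 42, 43, 46, 53, 58}, and the image of that set under t_4 equals {0, 21, 23, 29, 42, 43, 46, 53, 58}. -/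
-- computable integer version for b = 4
def payN : Bool → Bool → ℤ
  | false, false => 1
  | false, true  => 4
  | true,  false => 0
  | true,  true  => 3

def payoffN (σ : Fin 6 → Bool) (i : Fin 6) : ℤ :=
  ∑ j ∈ nbrs i, payN (σ i) (σ j)

def updateN (σ : Fin 6 → Bool) : Fin 6 → Bool := fun i =>
  let m := (nbrs i).sup' (nbrs_nonempty i) fun j => payoffN σ j
  if m ≤ payoffN σ i then σ i
  else if ∃ j ∈ nbrs i, payoffN σ j = m ∧ σ j = true then true else false

def TN (n : ℕ) : ℕ := enc (updateN (dec n))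

lemma pay_cast (a c : Bool) : pay 4 a c = (payN a c : ℝ) := by
  cases a <;> cases c <;> norm_num [pay, payN]

lemma payoff_cast (σ : Fin 6 → Bool) (i : Fin 6) :
    payoff 4 σ i = (payoffN σ i : ℝ) := by
  simp [payoff, payoffN, pay_cast]

lemma sup_cast (σ : Fin 6 → Bool) (i : Fin 6) :
    ((nbrs i).sup' (nbrs_nonempty i) fun j => ((payoffN σ j : ℤ) : ℝ))
      = (((nbrs i).sup' (nbrs_nonempty i) fun j => payoffN σ j : ℤ) : ℝ) :=
  (Finset.comp_sup'_eq_sup'_comp (nbrs_nonempty i) (Int.cast : ℤ → ℝ)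
    (fun x y => by simp [Int.cast_max])).symm

lemma update_eq_s5 (σ : Fin 6 → Bool) : update 4 σ = updateN σ := by
  funext i
  simp only [update, updateN, payoff_cast, sup_cast, Int.cast_le, Int.cast_inj]

lemma T_eq_s5 (n : ℕ) : T 4 n = TN n := by
  simp [T, TN, update_eq_s5]

theorem stmt5 :
    (Finset.range 63).image (T 4)
      = ({0, 5, 10, 17, 20, 21, 23, 29, 34, 40, 42, 43, 46, 53, 58} : Finset ℕ) ∧
    ({0, 5, 10, 17, 20, 21, 23, 29, 34, 40, 42, 43, 46, 53, 58} : Finset ℕ).image (T 4)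
      = ({0, 21, 23, 29, 42, 43, 46, 53, 58} : Finset ℕ) := by
  have h : ∀ s : Finset ℕ, s.image (T 4) = s.image TN := fun s =>
    Finset.image_congr (fun n _ => T_eq_s5 n)
  rw [h, h]
  constructor <;> decide
end

section
/- (Fate of the 3-in-a-row configuration across regimes) Consider the "3-in-a-row" states 21 and 42, in which one full row of the lattice defects and the other full row cooperates. For every real b with 3 ≤ b < 4, t_b(21) = 63 and t_b(42) = 63 (they evolve to pure cooperation); for b = 4, t_4(21) = 21 and t_4(42) = 42 (they are equilibria); and for every b > 4, t_b(21) = 0 and t_b(42) = 0 (they evolve to pure defection). -/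
lemma d21_0 : dec 21 0 = false := by decide
lemma d21_1 : dec 21 1 = true := by decide
lemma d21_2 : dec 21 2 = false := by decide
lemma d21_3 : dec 21 3 = true := by decide
lemma d21_4 : dec 21 4 = false := by decide
lemma d21_5 : dec 21 5 = true := by decide
lemma d42_0 : dec 42 0 = true := by decide
lemma d42_1 : dec 42 1 = false := by decide
lemma d42_2 : dec 42 2 = true := by decide
lemma d42_3 : dec 42 3 = false := by decide
lemma d42_4 : dec 42 4 = true := by decide
lemma d42_5 : dec 42 5 = false := by decide
lemma q21_0 (b : ℝ) : payoff b (dec 21) 0 = b + 2 := by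
  simp [payoff, nbrs, d21_0, d21_1, d21_2, d21_3, d21_4, d21_5, pay]; ring
lemma q21_1 (b : ℝ) : payoff b (dec 21) 1 = 6 := by
  simp [payoff, nbrs, d21_0, d21_1, d21_2, d21_3, d21_4, d21_5, pay]; ring
lemma q21_2 (b : ℝ) : payoff b (dec 21) 2 = b + 2 := by
  simp [payoff, nbrs, d21_0, d21_1, d21_2, d21_3, d21_4, d21_5, pay]; ring
lemma q21_3 (b : ℝ) : payoff b (dec 21) 3 = 6 := by
  simp [payoff, nbrs, d21_0, d21_1, d21_2, d21_3, d21_4, d21_5, pay]; ring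
lemma q21_4 (b : ℝ) : payoff b (dec 21) 4 = b + 2 := by
  simp [payoff, nbrs, d21_0, d21_1, d21_2, d21_3, d21_4, d21_5, pay]; ring
lemma q21_5 (b : ℝ) : payoff b (dec 21) 5 = 6 := by
  simp [payoff, nbrs, d21_0, d21_1, d21_2, d21_3, d21_4, d21_5, pay]; ring
lemma q42_0 (b : ℝ) : payoff b (dec 42) 0 = 6 := by
  simp [payoff, nbrs, d42_0, d42_1, d42_2, d42_3, d42_4, d42_5, pay]; ring
lemma q42_1 (b : ℝ) : payoff b (dec 42) 1 = b + 2 := by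
  simp [payoff, nbrs, d42_0, d42_1, d42_2, d42_3, d42_4, d42_5, pay]; ring
lemma q42_2 (b : ℝ) : payoff b (dec 42) 2 = 6 := by
  simp [payoff, nbrs, d42_0, d42_1, d42_2, d42_3, d42_4, d42_5, pay]; ring
lemma q42_3 (b : ℝ) : payoff b (dec 42) 3 = b + 2 := by
  simp [payoff, nbrs, d42_0, d42_1, d42_2, d42_3, d42_4, d42_5, pay]; ring
lemma q42_4 (b : ℝ) : payoff b (dec 42) 4 = 6 := by
  simp [payoff, nbrs, d42_0, d42_1, d42_2, d42_3, d42_4, d42_5, pay]; ring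
lemma q42_5 (b : ℝ) : payoff b (dec 42) 5 = b + 2 := by
  simp [payoff, nbrs, d42_0, d42_1, d42_2, d42_3, d42_4, d42_5, pay]; ring

lemma update_keep (b : ℝ) (σ : Fin 6 → Bool) (i : Fin 6)
    (h : ∀ j ∈ nbrs i, payoff b σ j ≤ payoff b σ i) : update b σ i = σ i := by
  simp only [update]; rw [if_pos (Finset.sup'_le _ _ h)]

lemma update_coop (b : ℝ) (σ : Fin 6 → Bool) (i j : Fin 6) (hj : j ∈ nbrs i) (hjc : σ j = true)
    (hmax : ∀ k ∈ nbrs i, payoff b σ k ≤ payoff b σ j) (hlt : payoff b σ i < payoff b σ j) :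
    update b σ i = true := by
  have hm : ((nbrs i).sup' (nbrs_nonempty i) fun k => payoff b σ k) = payoff b σ j :=
    le_antisymm (Finset.sup'_le _ _ hmax) (Finset.le_sup' _ hj)
  simp only [update]; rw [hm, if_neg (not_le.2 hlt), if_pos ⟨j, hj, rfl, hjc⟩]

lemma update_def (b : ℝ) (σ : Fin 6 → Bool) (i j : Fin 6) (hj : j ∈ nbrs i)
    (hmax : ∀ k ∈ nbrs i, payoff b σ k ≤ payoff b σ j) (hlt : payoff b σ i < payoff b σ j)
    (hdef : ∀ k ∈ nbrs i, payoff b σ k = payoff b σ j → σ k = false) :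
    update b σ i = false := by
  have hm : ((nbrs i).sup' (nbrs_nonempty i) fun k => payoff b σ k) = payoff b σ j :=
    le_antisymm (Finset.sup'_le _ _ hmax) (Finset.le_sup' _ hj)
  simp only [update]; rw [hm, if_neg (not_le.2 hlt), if_neg]
  rintro ⟨k, hk, he, ht⟩
  rw [hdef k hk he] at ht; exact Bool.noConfusion ht

theorem stmt7 :
    (∀ b : ℝ, 3 ≤ b → b < 4 → T b 21 = 63 ∧ T b 42 = 63) ∧
    (T 4 21 = 21 ∧ T 4 42 = 42) ∧
    (∀ b : ℝ, 4 < b → T b 21 = 0 ∧ T b 42 = 0) := by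
  refine ⟨fun b h3 h4 => ⟨?_, ?_⟩, ⟨?_, ?_⟩, fun b hb => ⟨?_, ?_⟩⟩
  ·
    have hu : update b (dec 21) = fun _ => true := by
      funext i; fin_cases i
      · exact update_coop b (dec 21) 0 1 (by decide) (by decide) (by intro k hk; simp [nbrs] at hk; rcases hk with rfl | rfl | rfl <;> simp only [q21_0, q21_1, q21_2, q21_3, q21_4, q21_5] <;> linarith) (by simp only [q21_0, q21_1, q21_2, q21_3, q21_4, q21_5]; linarith)
      · exact (update_keep b (dec 21) 1 (by intro k hk; simp [nbrs] at hk; rcases hk with rfl | rfl | rfl <;> simp only [q21_0, q21_1, q21_2, q21_3, q21_4, q21_5] <;> linarith)).trans (by decide)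
      · exact update_coop b (dec 21) 2 3 (by decide) (by decide) (by intro k hk; simp [nbrs] at hk; rcases hk with rfl | rfl | rfl <;> simp only [q21_0, q21_1, q21_2, q21_3, q21_4, q21_5] <;> linarith) (by simp only [q21_0, q21_1, q21_2, q21_3, q21_4, q21_5]; linarith)
      · exact (update_keep b (dec 21) 3 (by intro k hk; simp [nbrs] at hk; rcases hk with rfl | rfl | rfl <;> simp only [q21_0, q21_1, q21_2, q21_3, q21_4, q21_5] <;> linarith)).trans (by decide)
      · exact update_coop b (dec 21) 4 5 (by decide) (by decide) (by intro k hk; simp [nbrs] at hk; rcases hk with rfl | rfl | rfl <;> simp only [q21_0, q21_1, q21_2, q21_3, q21_4, q21_5] <;> linarith) (by simp only [q21_0, q21_1, q21_2, q21_3, q21_4, q21_5]; linarith)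
      · exact (update_keep b (dec 21) 5 (by intro k hk; simp [nbrs] at hk; rcases hk with rfl | rfl | rfl <;> simp only [q21_0, q21_1, q21_2, q21_3, q21_4, q21_5] <;> linarith)).trans (by decide)
    show enc (update b (dec 21)) = 63
    rw [hu]; decide
  ·
    have hu : update b (dec 42) = fun _ => true := by
      funext i; fin_cases i
      · exact (update_keep b (dec 42) 0 (by intro k hk; simp [nbrs] at hk; rcases hk with rfl | rfl | rfl <;> simp only [q42_0, q42_1, q42_2, q42_3, q42_4, q42_5] <;> linarith)).trans (by decide)
      · exact update_coop b (dec 42) 1 0 (by decide) (by decide) (by intro k hk; simp [nbrs] at hk; rcases hk with rfl | rfl | rfl <;> simp only [q42_0, q42_1, q42_2, q42_3, q42_4, q42_5] <;> linarith) (by simp only [q42_0, q42_1, q42_2, q42_3, q42_4, q42_5]; linarith)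
      · exact (update_keep b (dec 42) 2 (by intro k hk; simp [nbrs] at hk; rcases hk with rfl | rfl | rfl <;> simp only [q42_0, q42_1, q42_2, q42_3, q42_4, q42_5] <;> linarith)).trans (by decide)
      · exact update_coop b (dec 42) 3 2 (by decide) (by decide) (by intro k hk; simp [nbrs] at hk; rcases hk with rfl | rfl | rfl <;> simp only [q42_0, q42_1, q42_2, q42_3, q42_4, q42_5] <;> linarith) (by simp only [q42_0, q42_1, q42_2, q42_3, q42_4, q42_5]; linarith)
      · exact (update_keep b (dec 42) 4 (by intro k hk; simp [nbrs] at hk; rcases hk with rfl | rfl | rfl <;> simp only [q42_0, q42_1, q42_2, q42_3, q42_4, q42_5] <;> linarith)).trans (by decide)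
      · exact update_coop b (dec 42) 5 4 (by decide) (by decide) (by intro k hk; simp [nbrs] at hk; rcases hk with rfl | rfl | rfl <;> simp only [q42_0, q42_1, q42_2, q42_3, q42_4, q42_5] <;> linarith) (by simp only [q42_0, q42_1, q42_2, q42_3, q42_4, q42_5]; linarith)
    show enc (update b (dec 42)) = 63
    rw [hu]; decide
  ·
    have hu : update 4 (dec 21) = dec 21 := by
      funext i; fin_cases i
      · exact update_keep 4 (dec 21) 0 (by intro k hk; simp [nbrs] at hk; rcases hk with rfl | rfl | rfl <;> simp only [q21_0, q21_1, q21_2, q21_3, q21_4, q21_5] <;> norm_num)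
      · exact update_keep 4 (dec 21) 1 (by intro k hk; simp [nbrs] at hk; rcases hk with rfl | rfl | rfl <;> simp only [q21_0, q21_1, q21_2, q21_3, q21_4, q21_5] <;> norm_num)
      · exact update_keep 4 (dec 21) 2 (by intro k hk; simp [nbrs] at hk; rcases hk with rfl | rfl | rfl <;> simp only [q21_0, q21_1, q21_2, q21_3, q21_4, q21_5] <;> norm_num)
      · exact update_keep 4 (dec 21) 3 (by intro k hk; simp [nbrs] at hk; rcases hk with rfl | rfl | rfl <;> simp only [q21_0, q21_1, q21_2, q21_3, q21_4, q21_5] <;> norm_num)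
      · exact update_keep 4 (dec 21) 4 (by intro k hk; simp [nbrs] at hk; rcases hk with rfl | rfl | rfl <;> simp only [q21_0, q21_1, q21_2, q21_3, q21_4, q21_5] <;> norm_num)
      · exact update_keep 4 (dec 21) 5 (by intro k hk; simp [nbrs] at hk; rcases hk with rfl | rfl | rfl <;> simp only [q21_0, q21_1, q21_2, q21_3, q21_4, q21_5] <;> norm_num)
    show enc (update 4 (dec 21)) = 21
    rw [hu]; decide
  ·
    have hu : update 4 (dec 42) = dec 42 := by
      funext i; fin_cases i
      · exact update_keep 4 (dec 42) 0 (by intro k hk; simp [nbrs] at hk; rcases hk with rfl | rfl | rfl <;> simp only [q42_0, q42_1, q42_2, q42_3, q42_4, q42_5] <;> norm_num)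
      · exact update_keep 4 (dec 42) 1 (by intro k hk; simp [nbrs] at hk; rcases hk with rfl | rfl | rfl <;> simp only [q42_0, q42_1, q42_2, q42_3, q42_4, q42_5] <;> norm_num)
      · exact update_keep 4 (dec 42) 2 (by intro k hk; simp [nbrs] at hk; rcases hk with rfl | rfl | rfl <;> simp only [q42_0, q42_1, q42_2, q42_3, q42_4, q42_5] <;> norm_num)
      · exact update_keep 4 (dec 42) 3 (by intro k hk; simp [nbrs] at hk; rcases hk with rfl | rfl | rfl <;> simp only [q42_0, q42_1, q42_2, q42_3, q42_4, q42_5] <;> norm_num)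
      · exact update_keep 4 (dec 42) 4 (by intro k hk; simp [nbrs] at hk; rcases hk with rfl | rfl | rfl <;> simp only [q42_0, q42_1, q42_2, q42_3, q42_4, q42_5] <;> norm_num)
      · exact update_keep 4 (dec 42) 5 (by intro k hk; simp [nbrs] at hk; rcases hk with rfl | rfl | rfl <;> simp only [q42_0, q42_1, q42_2, q42_3, q42_4, q42_5] <;> norm_num)
    show enc (update 4 (dec 42)) = 42
    rw [hu]; decide
  ·
    have hu : update b (dec 21) = fun _ => false := by
      funext i; fin_cases i
      · exact (update_keep b (dec 21) 0 (by intro k hk; simp [nbrs] at hk; rcases hk with rfl | rfl | rfl <;> simp only [q21_0, q21_1, q21_2, q21_3, q21_4, q21_5] <;> linarith)).trans (by decide)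
      · exact update_def b (dec 21) 1 0 (by decide) (by intro k hk; simp [nbrs] at hk; rcases hk with rfl | rfl | rfl <;> simp only [q21_0, q21_1, q21_2, q21_3, q21_4, q21_5] <;> linarith) (by simp only [q21_0, q21_1, q21_2, q21_3, q21_4, q21_5]; linarith) (by intro k hk; simp [nbrs] at hk; rcases hk with rfl | rfl | rfl <;> simp only [q21_0, q21_1, q21_2, q21_3, q21_4, q21_5] <;> intro he <;> first | rfl | (exfalso; linarith))
      · exact (update_keep b (dec 21) 2 (by intro k hk; simp [nbrs] at hk; rcases hk with rfl | rfl | rfl <;> simp only [q21_0, q21_1, q21_2, q21_3, q21_4, q21_5] <;> linarith)).trans (by decide)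
      · exact update_def b (dec 21) 3 2 (by decide) (by intro k hk; simp [nbrs] at hk; rcases hk with rfl | rfl | rfl <;> simp only [q21_0, q21_1, q21_2, q21_3, q21_4, q21_5] <;> linarith) (by simp only [q21_0, q21_1, q21_2, q21_3, q21_4, q21_5]; linarith) (by intro k hk; simp [nbrs] at hk; rcases hk with rfl | rfl | rfl <;> simp only [q21_0, q21_1, q21_2, q21_3, q21_4, q21_5] <;> intro he <;> first | rfl | (exfalso; linarith))
      · exact (update_keep b (dec 21) 4 (by intro k hk; simp [nbrs] at hk; rcases hk with rfl | rfl | rfl <;> simp only [q21_0, q21_1, q21_2, q21_3, q21_4, q21_5] <;> linarith)).trans (by decide)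
      · exact update_def b (dec 21) 5 4 (by decide) (by intro k hk; simp [nbrs] at hk; rcases hk with rfl | rfl | rfl <;> simp only [q21_0, q21_1, q21_2, q21_3, q21_4, q21_5] <;> linarith) (by simp only [q21_0, q21_1, q21_2, q21_3, q21_4, q21_5]; linarith) (by intro k hk; simp [nbrs] at hk; rcases hk with rfl | rfl | rfl <;> simp only [q21_0, q21_1, q21_2, q21_3, q21_4, q21_5] <;> intro he <;> first | rfl | (exfalso; linarith))
    show enc (update b (dec 21)) = 0
    rw [hu]; decide
  ·
    have hu : update b (dec 42) = fun _ => false := by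
      funext i; fin_cases i
      · exact update_def b (dec 42) 0 1 (by decide) (by intro k hk; simp [nbrs] at hk; rcases hk with rfl | rfl | rfl <;> simp only [q42_0, q42_1, q42_2, q42_3, q42_4, q42_5] <;> linarith) (by simp only [q42_0, q42_1, q42_2, q42_3, q42_4, q42_5]; linarith) (by intro k hk; simp [nbrs] at hk; rcases hk with rfl | rfl | rfl <;> simp only [q42_0, q42_1, q42_2, q42_3, q42_4, q42_5] <;> intro he <;> first | rfl | (exfalso; linarith))
      · exact (update_keep b (dec 42) 1 (by intro k hk; simp [nbrs] at hk; rcases hk with rfl | rfl | rfl <;> simp only [q42_0, q42_1, q42_2, q42_3, q42_4, q42_5] <;> linarith)).trans (by decide)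
      · exact update_def b (dec 42) 2 3 (by decide) (by intro k hk; simp [nbrs] at hk; rcases hk with rfl | rfl | rfl <;> simp only [q42_0, q42_1, q42_2, q42_3, q42_4, q42_5] <;> linarith) (by simp only [q42_0, q42_1, q42_2, q42_3, q42_4, q42_5]; linarith) (by intro k hk; simp [nbrs] at hk; rcases hk with rfl | rfl | rfl <;> simp only [q42_0, q42_1, q42_2, q42_3, q42_4, q42_5] <;> intro he <;> first | rfl | (exfalso; linarith))
      · exact (update_keep b (dec 42) 3 (by intro k hk; simp [nbrs] at hk; rcases hk with rfl | rfl | rfl <;> simp only [q42_0, q42_1, q42_2, q42_3, q42_4, q42_5] <;> linarith)).trans (by decide)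
      · exact update_def b (dec 42) 4 5 (by decide) (by intro k hk; simp [nbrs] at hk; rcases hk with rfl | rfl | rfl <;> simp only [q42_0, q42_1, q42_2, q42_3, q42_4, q42_5] <;> linarith) (by simp only [q42_0, q42_1, q42_2, q42_3, q42_4, q42_5]; linarith) (by intro k hk; simp [nbrs] at hk; rcases hk with rfl | rfl | rfl <;> simp only [q42_0, q42_1, q42_2, q42_3, q42_4, q42_5] <;> intro he <;> first | rfl | (exfalso; linarith))
      · exact (update_keep b (dec 42) 5 (by intro k hk; simp [nbrs] at hk; rcases hk with rfl | rfl | rfl <;> simp only [q42_0, q42_1, q42_2, q42_3, q42_4, q42_5] <;> linarith)).trans (by decide)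
    show enc (update b (dec 42)) = 0
    rw [hu]; decide
end

section
/- (A lone defector converts exactly its neighbourhood) For every real parameter b > 3 and every state x in which exactly one cell i defects and all other cells cooperate, t_b(x) is the state in which exactly cell i and its three von Neumann neighbours defect and the remaining two cells cooperate. In particular, t_b(47) = 10 for all b > 3. -/
lemma nbrs_irrefl : ∀ i : Fin 6, i ∉ nbrs i := by decide
lemma nbrs_symm : ∀ i j : Fin 6, j ∈ nbrs i → i ∈ nbrs j := by decide

lemma payoff_lone (b : ℝ) (i k : Fin 6) :
    payoff b (fun j => decide (j ≠ i)) k =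
      if k = i then 3*b else if k ∈ nbrs i then 6 else 9 := by
  fin_cases i <;> fin_cases k <;>
    simp [payoff, nbrs, pay, Finset.sum_insert, Finset.mem_insert] <;> ring

lemma update_lone (b : ℝ) (hb : 3 < b) (i : Fin 6) :
    update b (fun j => decide (j ≠ i)) =
      fun k => if k = i ∨ k ∈ nbrs i then false else true := by
  have h9 : (9:ℝ) < 3*b := by linarith
  set σ : Fin 6 → Bool := fun j => decide (j ≠ i) with hσ
  have hple : ∀ k : Fin 6, k ≠ i → payoff b σ k ≤ 9 := by
    intro k hk
    rw [payoff_lone b i k, if_neg hk]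
    split_ifs <;> norm_num
  funext k
  show update b σ k = _
  simp only [update]
  by_cases hk : k = i
  · subst hk
    rw [if_pos, if_pos (Or.inl rfl)]
    · simp [hσ]
    · apply Finset.sup'_le
      intro j hj
      have hji : j ≠ k := fun h => nbrs_irrefl k (h ▸ hj)
      calc payoff b σ j ≤ 9 := hple j hji
        _ ≤ 3*b := le_of_lt h9
        _ = payoff b σ k := by rw [payoff_lone, if_pos rfl]
  · by_cases hkn : k ∈ nbrs i
    · -- neighbour of the defector
      have hik : i ∈ nbrs k := nbrs_symm _ _ hkn
      have hm : 3*b ≤ (nbrs k).sup' (nbrs_nonempty k) fun j => payoff b σ j := by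
        have := Finset.le_sup' (fun j => payoff b σ j) hik
        rwa [payoff_lone, if_pos rfl] at this
      have hpk : payoff b σ k = 6 := by rw [payoff_lone, if_neg hk, if_pos hkn]
      rw [if_neg, if_neg, if_pos (Or.inr hkn)]
      · rintro ⟨j, hj, hpj, hcj⟩
        have hji : j ≠ i := by simpa [hσ] using hcj
        have : payoff b σ j ≤ 9 := hple j hji
        have : (nbrs k).sup' (nbrs_nonempty k) (fun j => payoff b σ j) ≤ 9 := hpj ▸ this
        linarith
      · rw [hpk]; intro h; linarith
    · -- far cell
      have hpk : payoff b σ k = 9 := by rw [payoff_lone, if_neg hk, if_neg hkn]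
      rw [if_pos, if_neg (by simp [hk, hkn])]
      · simp [hσ, hk]
      · apply Finset.sup'_le
        intro j hj
        have hji : j ≠ i := by
          intro h; subst h
          exact hkn (nbrs_symm _ _ hj)
        rw [hpk]
        exact hple j hji

theorem stmt10 : ∀ b : ℝ, 3 < b →
    (∀ σ : Fin 6 → Bool, ∀ i : Fin 6, σ i = false → (∀ j : Fin 6, j ≠ i → σ j = true) →
      update b σ = fun j => if j = i ∨ j ∈ nbrs i then false else true) ∧
    T b 47 = 10 := by
  intro b hb
  have key : ∀ σ : Fin 6 → Bool, ∀ i : Fin 6, σ i = false →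
      (∀ j : Fin 6, j ≠ i → σ j = true) →
      update b σ = fun j => if j = i ∨ j ∈ nbrs i then false else true := by
    intro σ i h0 h1
    have hσ : σ = fun j => decide (j ≠ i) := by
      funext j
      by_cases h : j = i
      · simp [h, h0]
      · simp [h, h1 j h]
    rw [hσ, update_lone b hb i]
  refine ⟨key, ?_⟩
  have hdec : dec 47 = fun j => decide (j ≠ (1 : Fin 6)) := by
    funext j; fin_cases j <;> decide
  rw [T, hdec, update_lone b hb 1]
  decide
end
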